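/- Let $0<p<1$, $\mu>0$, $\sigma>0$, $\beta>0$, $r>0$, $k\ge 0$, $l>0$, and $x_e\ge 0$ with $kx+l>0$ for all $x>x_e$. Let $V:(x_e,\infty)\to\mathbb{R}$ be twice continuously differentiable with $V'(x)>0$ and $V''(x)<0$ for all $x>x_e$, with $V'$ a bijection from $(x_e,\infty)$ onto $(0,\infty)$, and suppose $V$ satisfies, for all $x>x_e$, $\beta V(x)+\frac{\mu^2}{2\sigma^2}\frac{V'(x)^2}{V''(x)}-G(kx+l,\,V'(x))-rxV'(x)=0$. Set $x(y):=(V')^{-1}(y)$ and $v(y):=V(x(y))-x(y)y$ for $y>0$. Then $v$ is twice continuously differentiable on $(0,\infty)$ and satisfies, for all $y>0$, $\beta\big(v(y)-y\,v'(y)\big)-\frac{\mu^2}{2\sigma^2}y^2 v''(y)-G\big(-k\,v'(y)+l,\;y\big)+r\,y\,v'(y)=0$. -/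

import Mathlib

open Real Set

/-- `G p u y = sup_{c ≥ u} (c^p/p - c y)`. -/
noncomputable def G (p u y : ℝ) : ℝ :=
  sSup ((fun c : ℝ => c ^ p / p - c * y) '' {c : ℝ | u ≤ c})

/-- if `V` is a `C²` solution of the primal HJB equation with `V' > 0`,
`V'' < 0` and `V'` a bijection from `(x_e,∞)` onto `(0,∞)`, then the dual function
`v(y) = V(x(y)) - x(y) y`, where `x(y) = (V')⁻¹(y)`, is `C²` on `(0,∞)` and satisfies the
dual semilinear ODE. -/
theorem stmt_5 (p μ σ β r k l xe : ℝ) (hp0 : 0 < p) (hp1 : p < 1) (hμ : 0 < μ) (hσ : 0 < σ)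
    (hβ : 0 < β) (hr : 0 < r) (hk : 0 ≤ k) (hl : 0 < l) (hxe : 0 ≤ xe)
    (hkxl : ∀ x : ℝ, xe < x → 0 < k * x + l)
    (V : ℝ → ℝ) (hV : ContDiffOn ℝ 2 V (Ioi xe))
    (hV' : ∀ x ∈ Ioi xe, 0 < deriv V x)
    (hV'' : ∀ x ∈ Ioi xe, deriv (deriv V) x < 0)
    (hbij : BijOn (deriv V) (Ioi xe) (Ioi 0))
    (hHJB : ∀ x ∈ Ioi xe,
      β * V x + μ ^ 2 / (2 * σ ^ 2) * (deriv V x) ^ 2 / deriv (deriv V) x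
        - G p (k * x + l) (deriv V x) - r * x * deriv V x = 0)
    (xinv : ℝ → ℝ)
    (hxinv : ∀ y ∈ Ioi (0 : ℝ), xinv y ∈ Ioi xe ∧ deriv V (xinv y) = y) :
    ContDiffOn ℝ 2 (fun y => V (xinv y) - xinv y * y) (Ioi 0) ∧
    ∀ y ∈ Ioi (0 : ℝ),
      β * ((fun y' => V (xinv y') - xinv y' * y') y
            - y * deriv (fun y' => V (xinv y') - xinv y' * y') y)
        - μ ^ 2 / (2 * σ ^ 2) * y ^ 2 * deriv (deriv (fun y' => V (xinv y') - xinv y' * y')) y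
        - G p (-k * deriv (fun y' => V (xinv y') - xinv y' * y') y + l) y
        + r * y * deriv (fun y' => V (xinv y') - xinv y' * y') y = 0 := by
  have hopen : IsOpen (Ioi xe) := isOpen_Ioi
  set f := deriv V with hfdef
  set f' := deriv f with hf'def
  set v : ℝ → ℝ := fun y' => V (xinv y') - xinv y' * y' with hvdef
  have hCf : ContDiffOn ℝ 1 f (Ioi xe) := hV.deriv_of_isOpen hopen (by norm_num)
  -- derivative of the inverse function
  have key : ∀ y ∈ Ioi (0 : ℝ), HasDerivAt xinv (f' (xinv y))⁻¹ y := by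
    intro y hy
    obtain ⟨hx, hfx⟩ := hxinv y hy
    have hCfx : ContDiffAt ℝ 1 f (xinv y) := hCf.contDiffAt (hopen.mem_nhds hx)
    have hstrict : HasStrictDerivAt f (f' (xinv y)) (xinv y) :=
      hCfx.hasStrictDerivAt (by norm_num)
    have hne : f' (xinv y) ≠ 0 := (hV'' _ hx).ne
    have hev : ∀ᶠ x in nhds (xinv y), xinv (f x) = x := by
      have h1 : ∀ᶠ x in nhds (xinv y), x ∈ Ioi xe := hopen.eventually_mem hx
      have hcont : ContinuousAt f (xinv y) := hCfx.continuousAt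
      have h2 : ∀ᶠ x in nhds (xinv y), f x ∈ Ioi (0 : ℝ) :=
        hcont.eventually_mem (isOpen_Ioi.mem_nhds (by rw [hfx]; exact hy))
      filter_upwards [h1, h2] with x hx1 hx2
      obtain ⟨hmem, heq⟩ := hxinv (f x) hx2
      exact hbij.injOn hmem hx1 heq
    have := hstrict.to_local_left_inverse hne hev
    rw [hfx] at this
    exact this.hasDerivAt
  -- derivative of v
  have hd : ∀ y ∈ Ioi (0 : ℝ), HasDerivAt v (-(xinv y)) y := by
    intro y hy
    obtain ⟨hx, hfx⟩ := hxinv y hy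
    have hxd := key y hy
    have hVd : HasDerivAt V (f (xinv y)) (xinv y) :=
      ((hV.contDiffAt (hopen.mem_nhds hx)).differentiableAt (by norm_num)).hasDerivAt
    have h1 : HasDerivAt (fun y' => V (xinv y')) (f (xinv y) * (f' (xinv y))⁻¹) y :=
      hVd.comp y hxd
    have h2 : HasDerivAt (fun y' => xinv y' * y')
        ((f' (xinv y))⁻¹ * y + xinv y * 1) y := hxd.mul (hasDerivAt_id y)
    have h3 := h1.fun_sub h2
    refine h3.congr_deriv ?_
    rw [hfx]; ring
  have hderiv_eq : ∀ y ∈ Ioi (0 : ℝ), deriv v y = -(xinv y) := fun y hy => (hd y hy).deriv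
  have hxinv_diff : DifferentiableOn ℝ xinv (Ioi 0) := fun y hy =>
    (key y hy).differentiableAt.differentiableWithinAt
  have hxinv_cont : ContinuousOn xinv (Ioi 0) := hxinv_diff.continuousOn
  have hf'cont : ContinuousOn f' (Ioi xe) :=
    hCf.continuousOn_deriv_of_isOpen hopen le_rfl
  have hxinv_C1 : ContDiffOn ℝ 1 xinv (Ioi 0) := by
    show ContDiffOn ℝ ((0 : ℕ) + 1) xinv (Ioi 0)
    rw [contDiffOn_succ_iff_deriv_of_isOpen isOpen_Ioi]
    refine ⟨hxinv_diff, by simp, ?_⟩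
    simp only [Nat.cast_zero, contDiffOn_zero]
    have hc : ContinuousOn (fun y => (f' (xinv y))⁻¹) (Ioi 0) :=
      (hf'cont.comp hxinv_cont fun y hy => (hxinv y hy).1).inv₀
        fun y hy => (hV'' _ (hxinv y hy).1).ne
    exact hc.congr fun y hy => (key y hy).deriv
  have hvC2 : ContDiffOn ℝ 2 v (Ioi 0) := by
    show ContDiffOn ℝ ((1 : ℕ) + 1) v (Ioi 0)
    rw [contDiffOn_succ_iff_deriv_of_isOpen isOpen_Ioi]
    refine ⟨fun y hy => (hd y hy).differentiableAt.differentiableWithinAt, by simp, ?_⟩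
    have h := hxinv_C1.neg.congr fun y hy => hderiv_eq y hy
    exact_mod_cast h
  refine ⟨hvC2, ?_⟩
  intro y hy
  obtain ⟨hx, hfx⟩ := hxinv y hy
  have hderiv2 : deriv (deriv v) y = -((f' (xinv y))⁻¹) := by
    have hEq : deriv v =ᶠ[nhds y] fun y' => -(xinv y') := by
      filter_upwards [isOpen_Ioi.eventually_mem hy] with z hz using hderiv_eq z hz
    rw [hEq.deriv_eq, deriv.fun_neg, (key y hy).deriv]
  have hvy : v y = V (xinv y) - xinv y * y := rfl
  rw [hderiv2, hderiv_eq y hy, hvy]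
  have hG : -k * -xinv y + l = k * xinv y + l := by ring
  rw [hG]
  have hh := hHJB (xinv y) hx
  rw [hfx] at hh
  have hne : f' (xinv y) ≠ 0 := (hV'' _ hx).ne
  field_simp at hh ⊢
  linarith [hh]
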